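/- Exponential SIIOS estimate for the Lur'e observer error (Section 5.1). Let n, m be positive integers, P a symmetric positive definite real n×n matrix with smallest eigenvalue λ_min(P) and largest eigenvalue λ_max(P), α > 0, B a real n×m matrix, G : ℝ → Matrix(ℝ, n, n) with G(t)ᵀP + P·G(t) + αP negative semidefinite for every t, and d : ℝ → ℝᵐ with ‖d(t)‖ ≤ D for all t. Then there exists a constant c > 0, depending only on P, B and α, such that every differentiable e : [0,∞) → ℝⁿ satisfying e′(t) = G(t)·e(t) + B·d(t) obeys, for all t ≥ 0: ‖e(t)‖ ≤ √(2·λ_max(P)/λ_min(P)) · ‖e(0)‖ · e^{−αt/4} + c·D. That is, the observer error dynamics are exponentially state-independent input-to-output stable with linear gain. -/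

import Mathlib

open Set Matrix
open scoped RealInnerProductSpace

section Helpers

variable {n : ℕ}

private lemma lure_clm_eq (A : Matrix (Fin n) (Fin n) ℝ) (x : EuclideanSpace ℝ (Fin n)) :
    Matrix.toEuclideanCLM (𝕜 := ℝ) A x = Matrix.toEuclideanLin A x := by
  rw [← Matrix.coe_toEuclideanCLM_eq_toEuclideanLin]; rfl

private lemma lure_transpose_mul_inner (A C : Matrix (Fin n) (Fin n) ℝ)
    (x : EuclideanSpace ℝ (Fin n)) :
    ⟪x, Matrix.toEuclideanLin (Aᵀ * C) x⟫ =
      ⟪Matrix.toEuclideanLin A x, Matrix.toEuclideanLin C x⟫ := by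
  rw [← lure_clm_eq, ← lure_clm_eq, ← lure_clm_eq]
  rw [show Aᵀ = star A by rw [Matrix.star_eq_conjTranspose,
    Matrix.conjTranspose_eq_transpose_of_trivial]]
  rw [_root_.map_mul, map_star, ContinuousLinearMap.mul_apply,
    ContinuousLinearMap.star_eq_adjoint, ContinuousLinearMap.adjoint_inner_right]

private lemma lure_mul_inner (A C : Matrix (Fin n) (Fin n) ℝ) (x : EuclideanSpace ℝ (Fin n)) :
    ⟪x, Matrix.toEuclideanLin (A * C) x⟫ =
      ⟪x, Matrix.toEuclideanLin A (Matrix.toEuclideanLin C x)⟫ := by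
  rw [← lure_clm_eq, ← lure_clm_eq, ← lure_clm_eq, _root_.map_mul,
    ContinuousLinearMap.mul_apply]

variable {P : Matrix (Fin n) (Fin n) ℝ} (hP : P.IsHermitian)

private lemma lure_key_eig (i : Fin n) :
    Matrix.toEuclideanLin P (hP.eigenvectorBasis i) =
      hP.eigenvalues i • hP.eigenvectorBasis i := by
  apply (WithLp.equiv 2 _).injective
  rw [WithLp.equiv_apply, Matrix.ofLp_toEuclideanLin_apply]
  simpa using hP.mulVec_eigenvectorBasis i

private lemma lure_quad_eq (x : EuclideanSpace ℝ (Fin n)) :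
    ⟪x, Matrix.toEuclideanLin P x⟫ =
      ∑ i, hP.eigenvalues i * ⟪hP.eigenvectorBasis i, x⟫ ^ 2 := by
  set b := hP.eigenvectorBasis
  have hsym := (Matrix.isHermitian_iff_isSymmetric.1 hP)
  rw [← b.sum_inner_mul_inner x (Matrix.toEuclideanLin P x)]
  refine Finset.sum_congr rfl fun i _ => ?_
  have h : ⟪b i, Matrix.toEuclideanLin P x⟫ = hP.eigenvalues i * ⟪b i, x⟫ := by
    rw [← hsym (b i) x, lure_key_eig hP i, real_inner_smul_left]
  rw [h, real_inner_comm x (b i)]; ring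

private lemma lure_norm_sq_eq (x : EuclideanSpace ℝ (Fin n)) :
    ‖x‖ ^ 2 = ∑ i, ⟪hP.eigenvectorBasis i, x⟫ ^ 2 := by
  have h := hP.eigenvectorBasis.sum_inner_mul_inner x x
  rw [← real_inner_self_eq_norm_sq, ← h]
  refine Finset.sum_congr rfl fun i _ => ?_
  rw [real_inner_comm x]; ring

private lemma lure_freq_slope {g : ℝ → ℝ} {g' x r : ℝ}
    (h : HasDerivWithinAt g g' (Ici x) x) (hr : g' < r) :
    ∃ᶠ z in nhdsWithin x (Ioi x), (z - x)⁻¹ * (g z - g x) < r := by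
  have h1 := hasDerivWithinAt_iff_tendsto_slope.1 h
  rw [Set.Ici_sdiff_left] at h1
  have hev : ∀ᶠ z in nhdsWithin x (Ioi x), slope g x z < r :=
    h1 (IsOpen.mem_nhds isOpen_Iio hr)
  refine hev.frequently.mono fun z hz => ?_
  rwa [slope_def_field, div_eq_inv_mul] at hz

end Helpers

set_option maxHeartbeats 1000000 in
theorem lure_observer_exp_siios (n m : ℕ) (hn : 0 < n) (hm : 0 < m)
    (P : Matrix (Fin n) (Fin n) ℝ) (hPsymm : P.IsSymm) (hPpos : P.PosDef)
    (α : ℝ) (hα : 0 < α)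
    (B : Matrix (Fin n) (Fin m) ℝ) :
    ∃ c > (0:ℝ), ∀ G : ℝ → Matrix (Fin n) (Fin n) ℝ,
      (∀ t : ℝ, ∀ x : EuclideanSpace ℝ (Fin n),
        ⟪x, Matrix.toEuclideanLin ((G t)ᵀ * P + P * G t + α • P) x⟫ ≤ 0) →
      ∀ (d : ℝ → EuclideanSpace ℝ (Fin m)) (D : ℝ), (∀ t : ℝ, ‖d t‖ ≤ D) →
      ∀ e : ℝ → EuclideanSpace ℝ (Fin n),
        (∀ t ≥ (0:ℝ), HasDerivAt e
          (Matrix.toEuclideanLin (G t) (e t) + Matrix.toEuclideanLin B (d t)) t) →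
        ∀ t ≥ (0:ℝ),
          ‖e t‖ ≤
            Real.sqrt (2 *
                (Finset.univ.sup' (Finset.univ_nonempty_iff.mpr ⟨⟨0, hn⟩⟩)
                  hPpos.1.eigenvalues) /
                (Finset.univ.inf' (Finset.univ_nonempty_iff.mpr ⟨⟨0, hn⟩⟩)
                  hPpos.1.eigenvalues))
              * ‖e 0‖ * Real.exp (-(α * t) / 4) + c * D := by
  classical
  have hne : (Finset.univ : Finset (Fin n)).Nonempty :=
    Finset.univ_nonempty_iff.mpr ⟨⟨0, hn⟩⟩
  set lam := hPpos.1.eigenvalues with hlam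
  set lmin := Finset.univ.inf' hne lam with hlmindef
  set lmax := Finset.univ.sup' hne lam with hlmaxdef
  have hlmin_pos : 0 < lmin := by
    rw [hlmindef, Finset.lt_inf'_iff]
    exact fun i _ => hPpos.eigenvalues_pos i
  have hminle : ∀ i, lmin ≤ lam i := fun i => Finset.inf'_le _ (Finset.mem_univ i)
  have hlemax : ∀ i, lam i ≤ lmax := fun i => Finset.le_sup' _ (Finset.mem_univ i)
  have hlmax_pos : 0 < lmax :=
    hlmin_pos.trans_le ((hminle ⟨0, hn⟩).trans (hlemax ⟨0, hn⟩))
  -- quadratic form bounds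
  have hlow : ∀ x : EuclideanSpace ℝ (Fin n),
      lmin * ‖x‖ ^ 2 ≤ ⟪x, Matrix.toEuclideanLin P x⟫ := by
    intro x
    rw [lure_quad_eq hPpos.1 x, lure_norm_sq_eq hPpos.1 x, Finset.mul_sum]
    exact Finset.sum_le_sum fun i _ =>
      mul_le_mul_of_nonneg_right (hminle i) (sq_nonneg _)
  have hup : ∀ x : EuclideanSpace ℝ (Fin n),
      ⟪x, Matrix.toEuclideanLin P x⟫ ≤ lmax * ‖x‖ ^ 2 := by
    intro x
    rw [lure_quad_eq hPpos.1 x, lure_norm_sq_eq hPpos.1 x, Finset.mul_sum]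
    exact Finset.sum_le_sum fun i _ =>
      mul_le_mul_of_nonneg_right (hlemax i) (sq_nonneg _)
  -- operator norm constant
  set Pl : EuclideanSpace ℝ (Fin n) →L[ℝ] EuclideanSpace ℝ (Fin n) :=
    LinearMap.toContinuousLinearMap (Matrix.toEuclideanLin P) with hPldef
  set Bl : EuclideanSpace ℝ (Fin m) →L[ℝ] EuclideanSpace ℝ (Fin n) :=
    LinearMap.toContinuousLinearMap (Matrix.toEuclideanLin B) with hBldef
  have hPlapp : ∀ x, Pl x = Matrix.toEuclideanLin P x := fun x => rfl
  have hBlapp : ∀ y, Bl y = Matrix.toEuclideanLin B y := fun y => rfl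
  set M := ‖Pl.comp Bl‖ with hMdef
  have hM0 : 0 ≤ M := norm_nonneg _
  have hMle : ∀ y, ‖Matrix.toEuclideanLin P (Matrix.toEuclideanLin B y)‖ ≤ M * ‖y‖ := by
    intro y
    simpa [hPlapp, hBlapp] using (Pl.comp Bl).le_opNorm y
  have hcpos0 : (0:ℝ) < 2 * M / (α * lmin) + 1 := by
    have : 0 ≤ 2 * M / (α * lmin) :=
      div_nonneg (by linarith) (mul_pos hα hlmin_pos).le
    linarith
  refine ⟨2 * M / (α * lmin) + 1, hcpos0, ?_⟩
  set c := 2 * M / (α * lmin) + 1 with hcdef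
  intro G hG d D hD e he t ht
  have hD0 : 0 ≤ D := (norm_nonneg (d 0)).trans (hD 0)
  -- the Lyapunov function
  set e' : ℝ → EuclideanSpace ℝ (Fin n) :=
    fun s => Matrix.toEuclideanLin (G s) (e s) + Matrix.toEuclideanLin B (d s) with he'def
  set g : ℝ → ℝ := fun s => ⟪e s, Matrix.toEuclideanLin P (e s)⟫ with hgdef
  have hg0 : ∀ s, 0 ≤ g s := fun s =>
    le_trans (mul_nonneg hlmin_pos.le (sq_nonneg _)) (hlow (e s))
  set gd : ℝ → ℝ :=
    fun s => ⟪e s, Matrix.toEuclideanLin P (e' s)⟫ + ⟪e' s, Matrix.toEuclideanLin P (e s)⟫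
    with hgddef
  have hgderiv : ∀ s ≥ (0:ℝ), HasDerivAt g (gd s) s := by
    intro s hs
    have h1 : HasDerivAt (fun u => Pl (e u)) (Pl (e' s)) s :=
      Pl.hasFDerivAt.comp_hasDerivAt s (he s hs)
    have h2 := (he s hs).inner ℝ h1
    simpa [hgdef, hgddef, hPlapp] using h2
  set ε := 2 * M ^ 2 * D ^ 2 / (α * lmin) with hεdef
  have hε0 : 0 ≤ ε := div_nonneg
    (mul_nonneg (mul_nonneg (by norm_num) (sq_nonneg M)) (sq_nonneg D))
    (mul_pos hα hlmin_pos).le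
  set K : ℝ := -(α / 2) with hKdef
  have hsym := Matrix.isHermitian_iff_isSymmetric.1 hPpos.1
  -- derivative bound
  have hbound : ∀ s ≥ (0:ℝ), gd s ≤ K * g s + ε := by
    intro s _
    have hGs := hG s (e s)
    rw [map_add, map_add, LinearMap.add_apply, LinearMap.add_apply,
      inner_add_right, inner_add_right, lure_transpose_mul_inner,
      lure_mul_inner] at hGs
    have hsmul : ⟪e s, Matrix.toEuclideanLin (α • P) (e s)⟫ = α * g s := by
      rw [_root_.map_smul, LinearMap.smul_apply, real_inner_smul_right, hgdef]
    rw [hsmul] at hGs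
    -- hGs : ⟪G e, P e⟫ + ⟪e, P (G e)⟫ + α * g s ≤ 0
    have hcross : ⟪e s, Matrix.toEuclideanLin P (Matrix.toEuclideanLin B (d s))⟫ ≤
        M * D * ‖e s‖ := by
      calc ⟪e s, Matrix.toEuclideanLin P (Matrix.toEuclideanLin B (d s))⟫
          ≤ ‖e s‖ * ‖Matrix.toEuclideanLin P (Matrix.toEuclideanLin B (d s))‖ :=
            real_inner_le_norm _ _
        _ ≤ ‖e s‖ * (M * ‖d s‖) := by
            apply mul_le_mul_of_nonneg_left (hMle (d s)) (norm_nonneg _)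
        _ ≤ ‖e s‖ * (M * D) := by
            apply mul_le_mul_of_nonneg_left
              (mul_le_mul_of_nonneg_left (hD s) hM0) (norm_nonneg _)
        _ = M * D * ‖e s‖ := by ring
    have hyoung : 2 * (M * D * ‖e s‖) ≤ α / 2 * (lmin * ‖e s‖ ^ 2) + ε := by
      have hεeq : ε * (α * lmin) = 2 * M ^ 2 * D ^ 2 := by
        rw [hεdef]; field_simp
      nlinarith [sq_nonneg (2 * (M * D) - α * lmin * ‖e s‖), mul_pos hα hlmin_pos,
        hg0 s, sq_nonneg (‖e s‖)]
    have hlow' := hlow (e s)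
    -- expand gd
    have hexp : gd s = (⟪Matrix.toEuclideanLin (G s) (e s), Matrix.toEuclideanLin P (e s)⟫
        + ⟪e s, Matrix.toEuclideanLin P (Matrix.toEuclideanLin (G s) (e s))⟫)
        + 2 * ⟪e s, Matrix.toEuclideanLin P (Matrix.toEuclideanLin B (d s))⟫ := by
      rw [hgddef, he'def]
      simp only [map_add, inner_add_left, inner_add_right]
      have h3 : ⟪Matrix.toEuclideanLin B (d s), Matrix.toEuclideanLin P (e s)⟫
          = ⟪e s, Matrix.toEuclideanLin P (Matrix.toEuclideanLin B (d s))⟫ := by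
        rw [real_inner_comm, ← hsym]
      rw [h3]; try ring
    rw [hexp]
    have hmain : ⟪Matrix.toEuclideanLin (G s) (e s), Matrix.toEuclideanLin P (e s)⟫
        + ⟪e s, Matrix.toEuclideanLin P (Matrix.toEuclideanLin (G s) (e s))⟫
        ≤ -(α * g s) := by linarith [hGs]
    have h2c : 2 * ⟪e s, Matrix.toEuclideanLin P (Matrix.toEuclideanLin B (d s))⟫
        ≤ α / 2 * (lmin * ‖e s‖ ^ 2) + ε := le_trans (by linarith [hcross]) hyoung
    have : α / 2 * (lmin * ‖e s‖ ^ 2) ≤ α / 2 * g s :=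
      mul_le_mul_of_nonneg_left hlow' (by linarith)
    rw [hKdef]; linarith
  -- Grönwall
  have hgron := le_gronwallBound_of_liminf_deriv_right_le
    (f := g) (f' := gd) (a := 0) (b := t) (δ := g 0) (K := K) (ε := ε)
    (fun s hs => ((hgderiv s hs.1).continuousAt).continuousWithinAt)
    (fun s hs r hr => lure_freq_slope ((hgderiv s hs.1).hasDerivWithinAt) hr)
    le_rfl
    (fun s hs => hbound s hs.1)
    t ⟨ht, le_rfl⟩
  have hKne : K ≠ 0 := by rw [hKdef]; intro h; nlinarith
  rw [gronwallBound_of_K_ne_0 hKne] at hgron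
  simp only [sub_zero] at hgron
  set E := Real.exp (K * t) with hEdef
  have hE0 : 0 ≤ E := Real.exp_nonneg _
  have hE1 : E ≤ 1 := by
    rw [hEdef]
    apply Real.exp_le_one_iff.mpr
    rw [hKdef]; nlinarith
  have htail : ε / K * (E - 1) ≤ 2 * ε / α := by
    have heq : ε / K * (E - 1) = 2 * ε / α * (1 - E) := by
      rw [hKdef]; field_simp [hα.ne']; try ring
    rw [heq]
    calc 2 * ε / α * (1 - E) ≤ 2 * ε / α * 1 :=
          mul_le_mul_of_nonneg_left (by linarith)
            (div_nonneg (by linarith) hα.le)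
      _ = 2 * ε / α := mul_one _
  have hgt : g t ≤ lmax * ‖e 0‖ ^ 2 * E + 2 * ε / α := by
    have hup0 : g 0 ≤ lmax * ‖e 0‖ ^ 2 := hup (e 0)
    have hg0E : g 0 * E ≤ lmax * ‖e 0‖ ^ 2 * E :=
      mul_le_mul_of_nonneg_right hup0 hE0
    linarith [hgron, htail]
  -- convert exp
  have hEeq : E = Real.exp (-(α * t) / 4) ^ 2 := by
    rw [hEdef, hKdef, ← Real.exp_nat_mul]
    congr 1
    try ring
  -- tail constant comparison
  have hQle : 2 * ε / α ≤ lmin * (c * D) ^ 2 := by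
    have hcc : α * lmin * c = 2 * M + α * lmin := by
      rw [hcdef]; field_simp
      try ring
    have heq2 : 2 * ε / α = 4 * M ^ 2 * D ^ 2 / (α ^ 2 * lmin) := by
      rw [hεdef]; field_simp
      try ring
    rw [heq2, div_le_iff₀ (mul_pos (pow_pos hα 2) hlmin_pos)]
    have hc2 : lmin * (c * D) ^ 2 * (α ^ 2 * lmin) = ((2 * M + α * lmin) * D) ^ 2 := by
      rw [← hcc]; ring
    rw [hc2]
    nlinarith [mul_nonneg (mul_nonneg (mul_nonneg hM0 hα.le) hlmin_pos.le) (sq_nonneg D),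
      mul_nonneg (sq_nonneg (α * lmin)) (sq_nonneg D), sq_nonneg D]
  -- final assembly
  set X := Real.sqrt (2 * lmax / lmin) * ‖e 0‖ * Real.exp (-(α * t) / 4) with hXdef
  have hX0 : 0 ≤ X := mul_nonneg (mul_nonneg (Real.sqrt_nonneg _) (norm_nonneg _))
    (Real.exp_nonneg _)
  have hXsq : X ^ 2 = 2 * lmax / lmin * ‖e 0‖ ^ 2 * Real.exp (-(α * t) / 4) ^ 2 := by
    rw [hXdef, mul_pow, mul_pow,
      Real.sq_sqrt (div_nonneg (by linarith) hlmin_pos.le)]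
  have hcpos : (0:ℝ) < c := by
    rw [hcdef]
    have : 0 ≤ 2 * M / (α * lmin) :=
      div_nonneg (by linarith) (mul_pos hα hlmin_pos).le
    linarith
  have hcD0 : 0 ≤ c * D := mul_nonneg hcpos.le hD0
  have hkey : ‖e t‖ ^ 2 ≤ X ^ 2 + (c * D) ^ 2 := by
    have h1 : lmin * ‖e t‖ ^ 2 ≤ g t := hlow (e t)
    rw [hXsq]
    have hexp0 : (0:ℝ) ≤ lmax * ‖e 0‖ ^ 2 * Real.exp (-(α * t) / 4) ^ 2 :=
      mul_nonneg (mul_nonneg hlmax_pos.le (sq_nonneg _)) (sq_nonneg _)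
    have h2 : lmin * ‖e t‖ ^ 2 ≤
        lmax * ‖e 0‖ ^ 2 * Real.exp (-(α * t) / 4) ^ 2 + lmin * (c * D) ^ 2 := by
      rw [← hEeq]
      exact (h1.trans hgt).trans (add_le_add_right hQle _)
    rw [← mul_le_mul_iff_right₀ hlmin_pos]
    have hrhs : lmin * (2 * lmax / lmin * ‖e 0‖ ^ 2 * Real.exp (-(α * t) / 4) ^ 2
        + (c * D) ^ 2) = 2 * lmax * ‖e 0‖ ^ 2 * Real.exp (-(α * t) / 4) ^ 2
        + lmin * (c * D) ^ 2 := by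
      field_simp
    rw [hrhs]
    linarith [h2, hexp0]
  have h3 : ‖e t‖ ^ 2 ≤ (X + c * D) ^ 2 := by
    rw [add_sq]
    linarith [hkey, mul_nonneg hX0 hcD0]
  calc ‖e t‖ = Real.sqrt (‖e t‖ ^ 2) := (Real.sqrt_sq (norm_nonneg _)).symm
    _ ≤ Real.sqrt ((X + c * D) ^ 2) := Real.sqrt_le_sqrt h3
    _ = X + c * D := Real.sqrt_sq (add_nonneg hX0 hcD0)
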